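/- Let X be a quandle, G_X its enveloping group, G an abelian group with a left G_X-action by automorphisms, and κ : X × X → G any family (κ_{x,y}). A braid word w on k strands transforms a bottom color vector x⃗ ∈ X^k and bead vector a⃗ ∈ G^k, letter by letter from bottom to top, by: σ_j replaces (x_j, x_{j+1}) by (x_{j+1}, x_j * x_{j+1}) and (a_j, a_{j+1}) by (a_{j+1}, x_{j+1}·a_j + a_{j+1} − (x_j*x_{j+1})·a_{j+1} + κ_{x_j,x_{j+1}}), leaving other entries fixed; σ_j^{−1} applies the inverse transformation. Define the Boltzmann weight of a letter σ_j^{ε} whose color vector immediately below it is x⃗ to be B = ε·(x_k·…·x_{j+2})·κ_{u,v}, where (u,v) = (x_j, x_{j+1}) if ε = +1, and (u,v) = (x_{j+1} \bar{*} x_j, x_j) if ε = −1 (c \bar{*} b being the unique a with a*b = c); the empty product acts as the identity. Then, with (y⃗, b⃗) the top vectors produced by w from (x⃗, a⃗), WS_{y⃗}(b⃗) − WS_{x⃗}(a⃗) equals the sum of the Boltzmann weights of all the letters of w, where WS_{x⃗}(a⃗) = Σ_{i=1}^{k} (x_k·…·x_{i+1})·a_i. -/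

import Mathlib

open Quandles

/-- The canonical map from a quandle to its enveloping group. -/
def iota (X : Type*) [Quandle X] (x : X) : Rack.EnvelGroup X := Rack.toEnvelGroup X x

/-- The bead transformation with 2-cochain `κ` of the braid generator `σ_j` (strands are
indexed `0, 1, 2, …`): colors transform by `(x_j, x_{j+1}) ↦ (x_{j+1}, x_j * x_{j+1})`
(the paper's `x_j * x_{j+1}` is Mathlib's `x_{j+1} ◃ x_j`), and beads by
`(a_j,a_{j+1}) ↦ (a_{j+1}, x_{j+1}·a_j + a_{j+1} − (x_j*x_{j+1})·a_{j+1} + κ_{x_j,x_{j+1}})`. -/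
def posStep {X G : Type*} [Quandle X] [AddCommGroup G]
    [DistribMulAction (Rack.EnvelGroup X) G] (κ : X → X → G)
    (j : ℕ) (s : (ℕ → X) × (ℕ → G)) : (ℕ → X) × (ℕ → G) :=
  (Function.update (Function.update s.1 j (s.1 (j + 1))) (j + 1) (s.1 (j + 1) ◃ s.1 j),
   Function.update (Function.update s.2 j (s.2 (j + 1))) (j + 1)
     (iota X (s.1 (j + 1)) • s.2 j + s.2 (j + 1) -
       iota X (s.1 (j + 1) ◃ s.1 j) • s.2 (j + 1) + κ (s.1 j) (s.1 (j + 1))))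

/-- Transformation associated to a braid word, applied letter by letter from bottom to
top; a letter `(j, true)` is `σ_j` and `(j, false)` is `σ_j⁻¹`. -/
def wordAction {σ : Type*} (pos neg : ℕ → σ → σ) : List (ℕ × Bool) → σ → σ
  | [], s => s
  | l :: w, s => wordAction pos neg w ((if l.2 then pos l.1 else neg l.1) s)

/-- The coefficient `x_{k-1}·x_{k-2}·…·x_{i+1}` (descending, in the enveloping group)
of the `i`-th bead in the weighted sum on `k` strands. -/
def coeff {X : Type*} [Quandle X] (k i : ℕ) (x : ℕ → X) : Rack.EnvelGroup X :=
  ((List.range (k - 1 - i)).map fun m => iota X (x (k - 1 - m))).prod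

/-- The weighted sum `WS_{x⃗}(a⃗) = Σ_i (x_{k-1}·…·x_{i+1})·a_i`. -/
def weightedSum {X G : Type*} [Quandle X] [AddCommGroup G]
    [DistribMulAction (Rack.EnvelGroup X) G]
    (k : ℕ) (s : (ℕ → X) × (ℕ → G)) : G :=
  ∑ i ∈ Finset.range k, coeff k i s.1 • s.2 i

/-- The Boltzmann weight of a letter `σ_j^ε` whose color vector immediately below it is
`x⃗`:  `ε·(x_{k-1}·…·x_{j+2})·κ_{u,v}` with `(u,v) = (x_j, x_{j+1})` if `ε = +1` and
`(u,v) = (x_{j+1} \bar{*} x_j, x_j)` if `ε = −1` (the paper's `c \bar{*} b` is Mathlib's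
`b ◃⁻¹ c`). -/
def letterWeight {X G : Type*} [Quandle X] [AddCommGroup G]
    [DistribMulAction (Rack.EnvelGroup X) G] (κ : X → X → G)
    (k : ℕ) (x : ℕ → X) : ℕ × Bool → G
  | (j, true) => coeff k (j + 1) x • κ (x j) (x (j + 1))
  | (j, false) => -(coeff k (j + 1) x • κ (x j ◃⁻¹ x (j + 1)) (x j))

/-- The sum of the Boltzmann weights of all the letters of a braid word, starting from a
given bottom state. -/
def totalWeight {X G : Type*} [Quandle X] [AddCommGroup G]
    [DistribMulAction (Rack.EnvelGroup X) G] (κ : X → X → G)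
    (pos neg : ℕ → (ℕ → X) × (ℕ → G) → (ℕ → X) × (ℕ → G)) (k : ℕ) :
    List (ℕ × Bool) → (ℕ → X) × (ℕ → G) → G
  | [], _ => 0
  | l :: w, s =>
      letterWeight κ k s.1 l +
        totalWeight κ pos neg k w ((if l.2 then pos l.1 else neg l.1) s)


section AuxLemmas

variable {X G : Type*} [Quandle X] [AddCommGroup G] [DistribMulAction (Rack.EnvelGroup X) G]

lemma iota_act (x y : X) :
    iota X (x ◃ y) = iota X x * iota X y * (iota X x)⁻¹ := by
  simpa [iota, Quandle.conj_act_eq_conj] using (Rack.toEnvelGroup X).map_act (x := x) (y := y)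

lemma iota_act_mul (a b : X) :
    iota X (b ◃ a) * iota X b = iota X b * iota X a := by
  rw [iota_act]; group

lemma coeff_congr {k i : ℕ} {x y : ℕ → X} (h : ∀ m, i < m → m < k → x m = y m) :
    coeff k i x = coeff k i y := by
  unfold coeff
  congr 1
  apply List.map_congr_left
  intro m hm
  rw [List.mem_range] at hm
  rw [h _ (by omega) (by omega)]

lemma coeff_succ {k i : ℕ} (x : ℕ → X) (h : i + 2 ≤ k) :
    coeff k i x = coeff k (i + 1) x * iota X (x (i + 1)) := by
  unfold coeff
  have h1 : k - 1 - i = (k - 1 - (i + 1)) + 1 := by omega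
  have h2 : k - 1 - (k - 1 - (i + 1)) = i + 1 := by omega
  rw [h1, List.range_succ, List.map_append, List.prod_append]
  simp [h2]

lemma coeff_posStep_ge {κ : X → X → G} {k i j : ℕ} {s : (ℕ → X) × (ℕ → G)} (h : j + 1 ≤ i) :
    coeff k i (posStep κ j s).1 = coeff k i s.1 := by
  apply coeff_congr
  intro m hm _
  simp only [posStep]
  rw [Function.update_of_ne (by omega), Function.update_of_ne (by omega)]

lemma coeff_posStep_lt {κ : X → X → G} {k j : ℕ} {s : (ℕ → X) × (ℕ → G)} (hk : j + 2 ≤ k) :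
    ∀ d i, j - 1 - i = d → i < j → coeff k i (posStep κ j s).1 = coeff k i s.1 := by
  intro d
  induction d with
  | zero =>
    intro i h0 hij
    have hi1 : i + 1 = j := by omega
    have e1 : (posStep κ j s).1 j = s.1 (j + 1) := by
      simp only [posStep]
      rw [Function.update_of_ne (by omega), Function.update_self]
    have e2 : (posStep κ j s).1 (j + 1) = s.1 (j + 1) ◃ s.1 j := by
      simp only [posStep, Function.update_self]
    have A := coeff_succ (k := k) (i := i) ((posStep κ j s).1) (by omega)
    have B := coeff_succ (k := k) (i := j) ((posStep κ j s).1) (by omega)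
    have A' := coeff_succ (k := k) (i := i) (s.1) (by omega)
    have B' := coeff_succ (k := k) (i := j) (s.1) (by omega)
    have C := coeff_posStep_ge (κ := κ) (k := k) (i := j + 1) (j := j) (s := s) (le_refl _)
    rw [A, hi1, B, e1, e2, C, A', hi1, B', mul_assoc, mul_assoc, iota_act_mul]
  | succ n ih =>
    intro i h0 hij
    have e : (posStep κ j s).1 (i + 1) = s.1 (i + 1) := by
      simp only [posStep]
      rw [Function.update_of_ne (by omega), Function.update_of_ne (by omega)]
    have A := coeff_succ (k := k) (i := i) ((posStep κ j s).1) (by omega)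
    have A' := coeff_succ (k := k) (i := i) (s.1) (by omega)
    rw [A, A', e, ih (i + 1) (by omega) (by omega)]

lemma posStep_weightedSum {κ : X → X → G} {k j : ℕ} (hk : j + 2 ≤ k)
    (s : (ℕ → X) × (ℕ → G)) :
    weightedSum k (posStep κ j s) =
      weightedSum k s + coeff k (j + 1) s.1 • κ (s.1 j) (s.1 (j + 1)) := by
  have key : weightedSum k (posStep κ j s) - weightedSum k s =
      coeff k (j + 1) s.1 • κ (s.1 j) (s.1 (j + 1)) := by
    unfold weightedSum
    rw [← Finset.sum_sub_distrib]
    have hsub : ({j, j + 1} : Finset ℕ) ⊆ Finset.range k := by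
      intro i hi
      simp only [Finset.mem_insert, Finset.mem_singleton] at hi
      rcases hi with h | h <;> simp [Finset.mem_range] <;> omega
    rw [← Finset.sum_subset hsub ?_]
    · rw [Finset.sum_pair (show j ≠ j + 1 by omega)]
      have e1 : (posStep κ j s).2 j = s.2 (j + 1) := by
        simp only [posStep]
        rw [Function.update_of_ne (by omega), Function.update_self]
      have e2 : (posStep κ j s).2 (j + 1) =
          iota X (s.1 (j + 1)) • s.2 j + s.2 (j + 1) -
            iota X (s.1 (j + 1) ◃ s.1 j) • s.2 (j + 1) + κ (s.1 j) (s.1 (j + 1)) := by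
        simp only [posStep, Function.update_self]
      have c1 : coeff k j (posStep κ j s).1 =
          coeff k (j + 1) s.1 * iota X (s.1 (j + 1) ◃ s.1 j) := by
        rw [coeff_succ _ (by omega), coeff_posStep_ge (le_refl _)]
        congr 1
        simp only [posStep, Function.update_self]
      have c2 : coeff k (j + 1) (posStep κ j s).1 = coeff k (j + 1) s.1 :=
        coeff_posStep_ge (le_refl _)
      have c3 : coeff k j s.1 = coeff k (j + 1) s.1 * iota X (s.1 (j + 1)) :=
        coeff_succ _ (by omega)
      rw [e1, e2, c1, c2, c3, mul_smul, mul_smul]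
      simp only [smul_add, smul_sub]
      abel
    · intro i hi hni
      simp only [Finset.mem_insert, Finset.mem_singleton, not_or] at hni
      obtain ⟨h1, h2⟩ := hni
      have eb : (posStep κ j s).2 i = s.2 i := by
        simp only [posStep]
        rw [Function.update_of_ne h2, Function.update_of_ne h1]
      have ec : coeff k i (posStep κ j s).1 = coeff k i s.1 := by
        rcases lt_or_ge i j with h | h
        · exact coeff_posStep_lt hk _ i rfl h
        · exact coeff_posStep_ge (by omega)
      rw [eb, ec, sub_self]
  linear_combination (norm := abel) key

lemma negStep_weightedSum {κ : X → X → G} {k j : ℕ}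
    (neg : ℕ → (ℕ → X) × (ℕ → G) → (ℕ → X) × (ℕ → G))
    (hneg : Function.RightInverse (neg j) (posStep κ j))
    (hk : j + 2 ≤ k) (s : (ℕ → X) × (ℕ → G)) :
    weightedSum k (neg j s) =
      weightedSum k s - coeff k (j + 1) s.1 • κ (s.1 j ◃⁻¹ s.1 (j + 1)) (s.1 j) := by
  set t := neg j s with ht
  have hts : posStep κ j t = s := hneg s
  have hcoeff : coeff k (j + 1) t.1 = coeff k (j + 1) s.1 := by
    rw [← hts]
    exact (coeff_posStep_ge (le_refl _)).symm
  have h1 : s.1 j = t.1 (j + 1) := by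
    rw [← hts]
    simp only [posStep]
    rw [Function.update_of_ne (by omega), Function.update_self]
  have h2 : s.1 (j + 1) = s.1 j ◃ t.1 j := by
    rw [h1, ← hts]
    simp only [posStep, Function.update_self]
  have h3 : t.1 j = s.1 j ◃⁻¹ s.1 (j + 1) := by
    rw [h2, Rack.invAct_act_eq]
  have := posStep_weightedSum (κ := κ) hk t
  rw [hts, hcoeff, ← h1, h3] at this
  linear_combination (norm := abel) -this

end AuxLemmas

/-- For the bead transformation with 2-cochain `κ` (`σ_j⁻¹` acting as the inverse
transformation of `σ_j`), the change of weighted sum along a braid word equals the sum of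
the Boltzmann weights of its letters:  `WS_{y⃗}(b⃗) − WS_{x⃗}(a⃗) = Σ B`. -/
theorem weightedSum_change_eq_totalWeight
    {X G : Type*} [Quandle X] [AddCommGroup G]
    [DistribMulAction (Rack.EnvelGroup X) G] (κ : X → X → G)
    (k : ℕ) (neg : ℕ → (ℕ → X) × (ℕ → G) → (ℕ → X) × (ℕ → G))
    (hneg : ∀ j : ℕ, Function.LeftInverse (neg j) (posStep κ j) ∧
      Function.RightInverse (neg j) (posStep κ j))
    (w : List (ℕ × Bool)) (hw : ∀ l ∈ w, l.1 + 2 ≤ k)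
    (s : (ℕ → X) × (ℕ → G)) :
    weightedSum k (wordAction (posStep κ) neg w s) - weightedSum k s =
      totalWeight κ (posStep κ) neg k w s := by
    induction w generalizing s with
  | nil => simp [wordAction, totalWeight]
  | cons l w ih =>
    obtain ⟨j, b⟩ := l
    have hj : j + 2 ≤ k := hw (j, b) List.mem_cons_self
    have hw' : ∀ l ∈ w, l.1 + 2 ≤ k := fun l hl => hw l (List.mem_cons_of_mem _ hl)
    cases b
    · simp only [wordAction, totalWeight, letterWeight, Bool.false_eq_true, if_false]
      rw [← ih hw' (neg j s),
        negStep_weightedSum neg (hneg j).2 hj s]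
      abel
    · simp only [wordAction, totalWeight, letterWeight, if_true]
      rw [← ih hw' (posStep κ j s), posStep_weightedSum hj s]
      abel
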